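/- For each k ∈ ℕ, the function t_k : X → {0,…,2^k−1} is continuous, where {0,…,2^k−1} carries the discrete topology (equivalently, t_k is locally constant on X). -/

import Mathlib

/-- The substitution σ on symbols: σ(0) = 01, σ(1) = 10 (with 0 ↔ `false`, 1 ↔ `true`). -/
def sigmaSub (b : Bool) : List Bool := [b, !b]

/-- The substitution σ extended to words by concatenation. -/
def subst (w : List Bool) : List Bool := w.flatMap sigmaSub

/-- The flip of a binary word: exchange 0 and 1 in every position. -/
def flipWord (w : List Bool) : List Bool := w.map (fun b => !b)

/-- u_k = σ^k(0). -/
def uWord : ℕ → List Bool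
  | 0 => [false]
  | k + 1 => subst (uWord k)

/-- The Morse sequence: its first 2^k symbols form the word u_k for every k. -/
def morse (n : ℕ) : Bool := (uWord (n + 1)).getD n false

/-- The subword of `x` on the interval `[p, p + w.length)` is the word `w`. -/
def readsWord (x : ℤ → Bool) (p : ℤ) (w : List Bool) : Prop :=
  ∀ j : ℕ, j < w.length → x (p + j) = w.getD j false

/-- The Morse minimal set X: bi-infinite sequences all of whose finite subwords
occur in the Morse sequence. -/
def morseShiftX : Set (ℤ → Bool) :=
  {x | ∀ (a : ℤ) (l : ℕ), ∃ s : ℕ, ∀ j : ℕ, j < l → x (a + j) = morse (s + j)}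

/-- The left shift T. -/
def shiftT (x : ℤ → Bool) : ℤ → Bool := fun i => x (i + 1)

/-- `hasOffset k x i`: coordinate 0 occupies position `i` in its interval, i.e. on every
interval `[-i + m·2^k, -i + (m+1)·2^k)` the sequence `x` reads u_k or its flip. -/
def hasOffset (k : ℕ) (x : ℤ → Bool) (i : ℕ) : Prop :=
  ∀ m : ℤ, readsWord x (-(i : ℤ) + m * 2 ^ k) (uWord k) ∨
    readsWord x (-(i : ℤ) + m * 2 ^ k) (flipWord (uWord k))

/-- The k-canonical cylinders: `cyl k false i` is u_k(i), `cyl k true i` is ū_k(i). -/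
def cyl (k : ℕ) (b : Bool) (i : ℕ) : Set {x : ℤ → Bool // x ∈ morseShiftX} :=
  {x | hasOffset k x.val i ∧
    x.val 0 = (if b then flipWord (uWord k) else uWord k).getD i false}

/- word lemmas -/

lemma subst_cons (a : Bool) (w : List Bool) : subst (a :: w) = a :: (!a) :: subst w := rfl

lemma flipWord_cons (a : Bool) (w : List Bool) : flipWord (a :: w) = (!a) :: flipWord w := rfl

lemma length_subst (w : List Bool) : (subst w).length = 2 * w.length := by
  induction w with
  | nil => rfl
  | cons a w ih => simp [subst_cons, ih]; ring

lemma length_uWord (k : ℕ) : (uWord k).length = 2 ^ k := by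
  induction k with
  | zero => rfl
  | succ k ih => simp [uWord, length_subst, ih, pow_succ]; ring

lemma length_flipWord (w : List Bool) : (flipWord w).length = w.length := by
  simp [flipWord]

lemma flipWord_flipWord (w : List Bool) : flipWord (flipWord w) = w := by
  induction w with
  | nil => rfl
  | cons a w ih => rw [flipWord_cons, flipWord_cons, ih, Bool.not_not]

lemma flipWord_append (w1 w2 : List Bool) :
    flipWord (w1 ++ w2) = flipWord w1 ++ flipWord w2 := by
  simp [flipWord]

lemma subst_append (w1 w2 : List Bool) : subst (w1 ++ w2) = subst w1 ++ subst w2 := by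
  simp [subst, List.flatMap_append]

lemma subst_flipWord (w : List Bool) : subst (flipWord w) = flipWord (subst w) := by
  induction w with
  | nil => rfl
  | cons a w ih =>
    rw [flipWord_cons, subst_cons, subst_cons, flipWord_cons, flipWord_cons, ih]

lemma uWord_succ (k : ℕ) : uWord (k + 1) = uWord k ++ flipWord (uWord k) := by
  induction k with
  | zero => rfl
  | succ k ih =>
    show subst (uWord (k+1)) = uWord (k+1) ++ flipWord (uWord (k+1))
    conv_lhs => rw [ih]
    rw [subst_append, subst_flipWord]
    rfl

lemma flipWord_getD (w : List Bool) (n : ℕ) (h : n < w.length) :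
    (flipWord w).getD n false = !(w.getD n false) := by
  rw [List.getD_eq_getElem _ _ (by simpa [flipWord] using h : n < (flipWord w).length),
    List.getD_eq_getElem _ _ h]
  simp [flipWord]

lemma subst_getD_even (w : List Bool) (n : ℕ) (h : n < w.length) :
    (subst w).getD (2 * n) false = w.getD n false := by
  induction w generalizing n with
  | nil => simp at h
  | cons a w ih =>
    cases n with
    | zero => rfl
    | succ n =>
      have : 2 * (n + 1) = (2 * n) + 1 + 1 := by ring
      rw [subst_cons, this]
      simpa using ih n (by simpa using h)

lemma subst_getD_odd (w : List Bool) (n : ℕ) (h : n < w.length) :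
    (subst w).getD (2 * n + 1) false = !(w.getD n false) := by
  induction w generalizing n with
  | nil => simp at h
  | cons a w ih =>
    cases n with
    | zero => rfl
    | succ n =>
      have : 2 * (n + 1) + 1 = (2 * n + 1) + 1 + 1 := by ring
      rw [subst_cons, this]
      simpa using ih n (by simpa using h)

lemma uWord_getD_stable (k k' n : ℕ) (h : n < 2 ^ k) (hk : k ≤ k') :
    (uWord k').getD n false = (uWord k).getD n false := by
  induction k' with
  | zero => interval_cases k; rfl
  | succ k' ih =>
    rcases Nat.lt_or_ge k (k' + 1) with hlt | hge
    · have hk' : k ≤ k' := Nat.lt_succ_iff.mp hlt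
      rw [uWord_succ, List.getD_append _ _ _ _ (by
        rw [length_uWord]; exact lt_of_lt_of_le h (Nat.pow_le_pow_right (by norm_num) hk'))]
      exact ih hk'
    · have : k = k' + 1 := le_antisymm hk hge
      subst this; rfl

lemma two_pow_lt (n : ℕ) : n < 2 ^ (n + 1) := by
  have h : n < 2 ^ n := Nat.lt_two_pow_self (n := n)
  have : 2 ^ (n + 1) = 2 * 2 ^ n := by ring
  omega

lemma morse_eq_getD (k n : ℕ) (h : n < 2 ^ k) : morse n = (uWord k).getD n false := by
  rcases Nat.le_total k (n + 1) with hle | hle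
  · exact uWord_getD_stable k (n + 1) n h hle
  · exact (uWord_getD_stable (n + 1) k n (two_pow_lt n) hle).symm

lemma morse_even (n : ℕ) : morse (2 * n) = morse n := by
  have hn : n < 2 ^ (n + 1) := two_pow_lt n
  have h2 : 2 * n < 2 ^ (n + 2) := by
    have : 2 ^ (n + 2) = 2 * 2 ^ (n + 1) := by ring
    omega
  rw [morse_eq_getD (n + 2) (2 * n) h2, morse_eq_getD (n + 1) n hn]
  show (subst (uWord (n+1))).getD (2 * n) false = _
  exact subst_getD_even _ _ (by rw [length_uWord]; exact hn)

lemma morse_odd (n : ℕ) : morse (2 * n + 1) = !(morse n) := by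
  have hn : n < 2 ^ (n + 1) := two_pow_lt n
  have h2 : 2 * n + 1 < 2 ^ (n + 2) := by
    have : 2 ^ (n + 2) = 2 * 2 ^ (n + 1) := by ring
    omega
  rw [morse_eq_getD (n + 2) (2 * n + 1) h2, morse_eq_getD (n + 1) n hn]
  show (subst (uWord (n+1))).getD (2 * n + 1) false = _
  exact subst_getD_odd _ _ (by rw [length_uWord]; exact hn)

lemma morse_no_three (q : ℕ) : ¬ (morse q = morse (q + 1) ∧ morse (q + 1) = morse (q + 2)) := by
  rintro ⟨h1, h2⟩
  rcases Nat.even_or_odd q with ⟨m, hm⟩ | ⟨m, hm⟩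
  · have hq : q = 2 * m := by omega
    subst hq
    rw [show 2 * m + 1 = 2 * m + 1 from rfl, morse_odd, morse_even] at h1
    exact absurd h1 (by cases morse m <;> simp)
  · subst hm
    have h2' : morse (2 * (m+1)) = morse (2 * (m+1) + 1) := by
      rw [show 2 * (m+1) + 1 = 2*m+1 + 2 by ring, show 2 * (m+1) = 2*m+1 + 1 by ring]
      exact h2
    rw [morse_odd, morse_even] at h2'
    exact absurd h2' (by cases morse (m+1) <;> simp)

lemma morse_no_alt (k : ℕ) : ∀ s : ℕ,
    ¬ (∀ t : ℕ, t < 4 → morse (s + (t + 1) * 2 ^ k) = !(morse (s + t * 2 ^ k))) := by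
  induction k with
  | zero =>
    intro s H
    simp only [pow_zero, mul_one] at H
    have e1 : morse (s + 2) = morse s := by
      have h0 := H 0 (by norm_num); have h1 := H 1 (by norm_num)
      simp at h0 h1
      rw [show s + 2 = s + 1 + 1 by ring] at h1 ⊢
      rw [h1, h0]; cases morse s <;> rfl
    have e2 : morse (s + 4) = morse (s + 2) := by
      have h2 := H 2 (by norm_num); have h3 := H 3 (by norm_num)
      rw [show s + 4 = s + 3 + 1 by ring] at h3 ⊢
      rw [show s + 3 = s + 2 + 1 by ring] at h3 ⊢
      rw [h3, h2]; cases morse (s+2) <;> rfl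
    rcases Nat.even_or_odd s with ⟨m, hm⟩ | ⟨m, hm⟩
    · have hs : s = 2 * m := by omega
      subst hs
      apply morse_no_three m
      constructor
      · rw [← morse_even m, ← morse_even (m+1)]
        rw [show 2 * (m+1) = 2*m + 2 by ring]; exact e1.symm
      · rw [← morse_even (m+1), ← morse_even (m+2)]
        rw [show 2 * (m+1) = 2*m + 2 by ring, show 2 * (m+2) = 2*m + 4 by ring]
        exact e2.symm
    · have hs : s = 2 * m + 1 := by omega
      subst hs
      apply morse_no_three m
      have f1 : (!morse m) = !morse (m+1) := by
        rw [← morse_odd m, ← morse_odd (m+1)]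
        rw [show 2 * (m+1) + 1 = 2*m+1 + 2 by ring]; exact e1.symm
      have f2 : (!morse (m+1)) = !morse (m+2) := by
        rw [← morse_odd (m+1), ← morse_odd (m+2)]
        rw [show 2 * (m+1) + 1 = 2*m+1 + 2 by ring, show 2 * (m+2) + 1 = 2*m+1 + 4 by ring]
        exact e2.symm
      exact ⟨Bool.not_inj f1, Bool.not_inj f2⟩
  | succ k ih =>
    intro s H
    rcases Nat.even_or_odd s with ⟨q, hq⟩ | ⟨q, hq⟩
    · have hs : s = 2 * q := by omega
      subst hs
      apply ih q
      intro t ht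
      have := H t ht
      rw [show 2*q + (t+1) * 2^(k+1) = 2 * (q + (t+1) * 2^k) by ring,
        show 2*q + t * 2^(k+1) = 2 * (q + t * 2^k) by ring, morse_even, morse_even] at this
      exact this
    · have hs : s = 2 * q + 1 := by omega
      subst hs
      apply ih q
      intro t ht
      have := H t ht
      rw [show 2*q + 1 + (t+1) * 2^(k+1) = 2 * (q + (t+1) * 2^k) + 1 by ring,
        show 2*q + 1 + t * 2^(k+1) = 2 * (q + t * 2^k) + 1 by ring, morse_odd, morse_odd] at this
      exact Bool.not_inj this

/- readsWord lemmas -/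

lemma readsWord_congr {x : ℤ → Bool} {p p' : ℤ} {w : List Bool}
    (h : readsWord x p w) (e : p = p') : readsWord x p' w := e ▸ h

lemma readsWord_append_left {x : ℤ → Bool} {p : ℤ} {w1 w2 : List Bool}
    (h : readsWord x p (w1 ++ w2)) : readsWord x p w1 := by
  intro j hj
  have := h j (by rw [List.length_append]; omega)
  rwa [List.getD_append _ _ _ _ hj] at this

lemma readsWord_append_right {x : ℤ → Bool} {p : ℤ} {w1 w2 : List Bool}
    (h : readsWord x p (w1 ++ w2)) : readsWord x (p + (w1.length : ℤ)) w2 := by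
  intro j hj
  have := h (w1.length + j) (by rw [List.length_append]; omega)
  rw [List.getD_append_right _ _ _ _ (by omega), Nat.add_sub_cancel_left] at this
  rw [add_assoc]
  rwa [Nat.cast_add] at this

lemma uWord_getD_zero (k : ℕ) : (uWord k).getD 0 false = false := by
  induction k with
  | zero => rfl
  | succ k ih =>
    rw [uWord_succ, List.getD_append _ _ _ _ (by rw [length_uWord]; positivity)]
    exact ih

lemma uWord_getD_pow (k : ℕ) : (uWord (k + 1)).getD (2 ^ k) false = true := by
  rw [uWord_succ, List.getD_append_right _ _ _ _ (by rw [length_uWord]),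
    length_uWord, Nat.sub_self,
    flipWord_getD _ _ (by rw [length_uWord]; positivity), uWord_getD_zero]
  rfl

lemma reads_block_flip {x : ℤ → Bool} {p : ℤ} {k : ℕ}
    (h : readsWord x p (uWord (k + 1)) ∨ readsWord x p (flipWord (uWord (k + 1)))) :
    x (p + 2 ^ k) = !(x p) := by
  have hlen : 2 ^ k < (uWord (k + 1)).length := by
    rw [length_uWord]
    exact Nat.pow_lt_pow_right (by norm_num) (Nat.lt_succ_self k)
  have hlen0 : 0 < (uWord (k + 1)).length := by rw [length_uWord]; positivity
  rcases h with h | h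
  · have h0 := h 0 hlen0
    have h1 := h (2 ^ k) hlen
    rw [uWord_getD_zero] at h0
    rw [uWord_getD_pow] at h1
    push_cast at h0 h1
    rw [add_zero] at h0
    rw [h1, h0]
    rfl
  · have h0 := h 0 (by rwa [length_flipWord])
    have h1 := h (2 ^ k) (by rwa [length_flipWord])
    rw [flipWord_getD _ _ hlen0, uWord_getD_zero] at h0
    rw [flipWord_getD _ _ hlen, uWord_getD_pow] at h1
    push_cast at h0 h1
    rw [add_zero] at h0
    rw [h1, h0]
    rfl

lemma hasOffset_down {k : ℕ} {x : ℤ → Bool} {i : ℕ}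
    (h : hasOffset (k + 1) x i) : hasOffset k x (i % 2 ^ k) := by
  intro m
  have hi : (i : ℤ) = 2 ^ k * (i / 2 ^ k : ℕ) + (i % 2 ^ k : ℕ) := by
    exact_mod_cast (Nat.div_add_mod i (2 ^ k)).symm
  rcases Int.even_or_odd (m + (i / 2 ^ k : ℕ)) with ⟨m', hm'⟩ | ⟨m', hm'⟩
  · have e1 : -((i % 2 ^ k : ℕ) : ℤ) + m * 2 ^ k = -(i : ℤ) + m' * 2 ^ (k + 1) := by
      rw [hi]; linear_combination (2 : ℤ) ^ k * hm'
    rcases h m' with hr | hr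
    · rw [uWord_succ] at hr
      exact Or.inl (readsWord_congr (readsWord_append_left hr) e1.symm)
    · rw [uWord_succ, flipWord_append] at hr
      exact Or.inr (readsWord_congr (readsWord_append_left hr) e1.symm)
  · have e1 : (-(i : ℤ) + m' * 2 ^ (k + 1)) + ((uWord k).length : ℤ)
        = -((i % 2 ^ k : ℕ) : ℤ) + m * 2 ^ k := by
      rw [hi, length_uWord, Nat.cast_pow, Nat.cast_ofNat]
      linear_combination (-(2 : ℤ) ^ k) * hm'
    rcases h m' with hr | hr
    · rw [uWord_succ] at hr
      exact Or.inr (readsWord_congr (readsWord_append_right hr) e1)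
    · rw [uWord_succ, flipWord_append, flipWord_flipWord] at hr
      exact Or.inl (readsWord_congr (readsWord_append_right hr)
        (by rw [length_flipWord]; exact e1))

lemma not_both (k r : ℕ) (x : ℤ → Bool) (hx : x ∈ morseShiftX)
    (h0 : hasOffset (k + 1) x r) (h1 : hasOffset (k + 1) x (r + 2 ^ k)) : False := by
  have alt : ∀ n : ℤ, x (-(r : ℤ) + (n + 1) * 2 ^ k) = !(x (-(r : ℤ) + n * 2 ^ k)) := by
    intro n
    rcases Int.even_or_odd n with ⟨m', hm'⟩ | ⟨m', hm'⟩
    · have e1 : -(r : ℤ) + n * 2 ^ k = -(r : ℤ) + m' * 2 ^ (k + 1) := by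
        linear_combination (2 : ℤ) ^ k * hm'
      have e2 : -(r : ℤ) + (n + 1) * 2 ^ k = (-(r : ℤ) + m' * 2 ^ (k + 1)) + 2 ^ k := by
        linear_combination (2 : ℤ) ^ k * hm'
      rw [e1, e2]
      exact reads_block_flip (h0 m')
    · have e1 : -(r : ℤ) + n * 2 ^ k = -(((r + 2 ^ k : ℕ)) : ℤ) + (m' + 1) * 2 ^ (k + 1) := by
        push_cast; linear_combination (2 : ℤ) ^ k * hm'
      have e2 : -(r : ℤ) + (n + 1) * 2 ^ k
          = (-(((r + 2 ^ k : ℕ)) : ℤ) + (m' + 1) * 2 ^ (k + 1)) + 2 ^ k := by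
        push_cast; linear_combination (2 : ℤ) ^ k * hm'
      rw [e1, e2]
      exact reads_block_flip (h1 (m' + 1))
  obtain ⟨s, hs⟩ := hx (-(r : ℤ)) (4 * 2 ^ k + 1)
  apply morse_no_alt k s
  intro t ht
  have hb1 : (t + 1) * 2 ^ k < 4 * 2 ^ k + 1 := by
    have : (t + 1) * 2 ^ k ≤ 4 * 2 ^ k := Nat.mul_le_mul_right _ (by omega)
    omega
  have hb0 : t * 2 ^ k < 4 * 2 ^ k + 1 := by
    have : t * 2 ^ k ≤ 4 * 2 ^ k := Nat.mul_le_mul_right _ (by omega)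
    omega
  rw [← hs ((t + 1) * 2 ^ k) hb1, ← hs (t * 2 ^ k) hb0]
  have := alt (t : ℤ)
  rw [show -(r : ℤ) + (((t + 1) * 2 ^ k : ℕ) : ℤ) = -(r : ℤ) + ((t : ℤ) + 1) * 2 ^ k by
      push_cast; ring,
    show -(r : ℤ) + ((t * 2 ^ k : ℕ) : ℤ) = -(r : ℤ) + (t : ℤ) * 2 ^ k by push_cast; ring]
  exact this

lemma offset_unique (k : ℕ) : ∀ x ∈ morseShiftX, ∀ i j, i < 2 ^ k → j < 2 ^ k →
    hasOffset k x i → hasOffset k x j → i = j := by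
  induction k with
  | zero => intro x _ i j hi hj _ _; omega
  | succ k ih =>
    intro x hx i j hi hj hoi hoj
    have hpos : 0 < 2 ^ k := Nat.pow_pos (by norm_num)
    have hmod : i % 2 ^ k = j % 2 ^ k :=
      ih x hx _ _ (Nat.mod_lt _ hpos) (Nat.mod_lt _ hpos) (hasOffset_down hoi)
        (hasOffset_down hoj)
    have ei := Nat.div_add_mod i (2 ^ k)
    have ej := Nat.div_add_mod j (2 ^ k)
    have hqi : i / 2 ^ k < 2 := Nat.div_lt_of_lt_mul (by rw [← pow_succ]; exact hi)
    have hqj : j / 2 ^ k < 2 := Nat.div_lt_of_lt_mul (by rw [← pow_succ]; exact hj)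
    have hqi' : i / 2 ^ k = 0 ∨ i / 2 ^ k = 1 := by
      revert hqi; generalize i / 2 ^ k = q; omega
    have hqj' : j / 2 ^ k = 0 ∨ j / 2 ^ k = 1 := by
      revert hqj; generalize j / 2 ^ k = q; omega
    rcases hqi' with h0i | h1i <;> rcases hqj' with h0j | h1j
    · simp only [h0i, Nat.mul_zero, Nat.zero_add] at ei
      simp only [h0j, Nat.mul_zero, Nat.zero_add] at ej
      omega
    · exfalso
      simp only [h0i, Nat.mul_zero, Nat.zero_add] at ei
      simp only [h1j, Nat.mul_one] at ej
      have hir : i = i % 2 ^ k := ei.symm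
      have hjr : j = i % 2 ^ k + 2 ^ k := by omega
      exact not_both k (i % 2 ^ k) x hx (hir ▸ hoi) (hjr ▸ hoj)
    · exfalso
      simp only [h0j, Nat.mul_zero, Nat.zero_add] at ej
      simp only [h1i, Nat.mul_one] at ei
      have hjr : j = j % 2 ^ k := ej.symm
      have hir : i = j % 2 ^ k + 2 ^ k := by omega
      exact not_both k (j % 2 ^ k) x hx (hjr ▸ hoj) (hir ▸ hoi)
    · simp only [h1i, Nat.mul_one] at ei
      simp only [h1j, Nat.mul_one] at ej
      omega

/- topology -/

lemma isClosed_reads (p : ℤ) (w : List Bool) :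
    IsClosed {y : {x : ℤ → Bool // x ∈ morseShiftX} | readsWord y.val p w} := by
  have he : {y : {x : ℤ → Bool // x ∈ morseShiftX} | readsWord y.val p w}
      = ⋂ (j : ℕ) (_ : j < w.length),
        {y : {x : ℤ → Bool // x ∈ morseShiftX} | y.val (p + j) = w.getD j false} := by
    ext y
    simp only [Set.mem_setOf_eq, Set.mem_iInter, readsWord]
  rw [he]
  exact isClosed_iInter fun j => isClosed_iInter fun _ =>
    isClosed_eq ((continuous_apply _).comp continuous_subtype_val) continuous_const

lemma isClosed_offsetSet (k i : ℕ) :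
    IsClosed {y : {x : ℤ → Bool // x ∈ morseShiftX} | hasOffset k y.val i} := by
  have he : {y : {x : ℤ → Bool // x ∈ morseShiftX} | hasOffset k y.val i}
      = ⋂ (m : ℤ),
        ({y : {x : ℤ → Bool // x ∈ morseShiftX} |
            readsWord y.val (-(i : ℤ) + m * 2 ^ k) (uWord k)} ∪
         {y : {x : ℤ → Bool // x ∈ morseShiftX} |
            readsWord y.val (-(i : ℤ) + m * 2 ^ k) (flipWord (uWord k))}) := by
    ext y
    simp only [Set.mem_setOf_eq, Set.mem_iInter, Set.mem_union, hasOffset]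
  rw [he]
  exact isClosed_iInter fun m => (isClosed_reads _ _).union (isClosed_reads _ _)

/-- Any function t_k : X → {0,…,2^k−1} satisfying the defining property of the position
of coordinate 0 in its interval is locally constant (equivalently, continuous for the
discrete topology on its range). -/
theorem morse_tk_locally_constant (k : ℕ)
    (t : {x : ℤ → Bool // x ∈ morseShiftX} → ℕ)
    (ht : ∀ x, t x < 2 ^ k ∧ hasOffset k x.val (t x)) :
    IsLocallyConstant t := by
  rw [IsLocallyConstant.iff_isOpen_fiber]
  intro i
  rcases Nat.lt_or_ge i (2 ^ k) with hi | hi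
  · have hA : t ⁻¹' {i} = {y : {x : ℤ → Bool // x ∈ morseShiftX} | hasOffset k y.val i} := by
      ext y
      simp only [Set.mem_preimage, Set.mem_singleton_iff, Set.mem_setOf_eq]
      constructor
      · rintro rfl; exact (ht y).2
      · intro h
        exact offset_unique k y.val y.prop (t y) i (ht y).1 hi (ht y).2 h
    rw [hA, ← isClosed_compl_iff]
    have hc : {y : {x : ℤ → Bool // x ∈ morseShiftX} | hasOffset k y.val i}ᶜ
        = ⋃ j ∈ (Finset.range (2 ^ k)).erase i,
            {y : {x : ℤ → Bool // x ∈ morseShiftX} | hasOffset k y.val j} := by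
      ext y
      simp only [Set.mem_compl_iff, Set.mem_setOf_eq, Set.mem_iUnion, Finset.mem_erase,
        Finset.mem_range, exists_prop]
      constructor
      · intro h
        refine ⟨t y, ⟨?_, (ht y).1⟩, (ht y).2⟩
        rintro rfl
        exact h (ht y).2
      · rintro ⟨j, ⟨hji, hjlt⟩, hoj⟩ hoi
        exact hji (offset_unique k y.val y.prop j i hjlt hi hoj hoi)
    rw [hc]
    exact Set.Finite.isClosed_biUnion (Finset.finite_toSet _) fun j _ => isClosed_offsetSet k j
  · have : t ⁻¹' {i} = ∅ := by
      ext y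
      simp only [Set.mem_preimage, Set.mem_singleton_iff, Set.mem_empty_iff_false,
        iff_false]
      intro h
      have := (ht y).1
      omega
    rw [this]
    exact isOpen_empty
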